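/- On ℂ³ ∖ {0} with coordinates (x₀, x₁, x₂), set ρ(x)² := |x₀|² + |x₁|² + |x₂|² and define gⱼ(x) := conj(xⱼ) · ρ(x)⁻⁶ for j = 0, 1, 2. Then for every x ≠ 0, the sum ∂̄₀g₀(x) + ∂̄₁g₁(x) + ∂̄₂g₂(x) = 0, where ∂̄ⱼ denotes the antiholomorphic Wirtinger derivative in the j-th coordinate. -/

import Mathlib

open Complex

/-- The antiholomorphic Wirtinger derivative in the `j`-th coordinate of a complex-valued
function on `ℂ³`. -/
noncomputable def wbar (j : Fin 3) (h : (Fin 3 → ℂ) → ℂ) (x : Fin 3 → ℂ) : ℂ :=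
  (2 : ℂ)⁻¹ * (fderiv ℝ h x (Pi.single j 1) + Complex.I * fderiv ℝ h x (Pi.single j Complex.I))

/-- The norm `ρ(x)` with `ρ(x)² = |x₀|² + |x₁|² + |x₂|²`. -/
noncomputable def rho (x : Fin 3 → ℂ) : ℝ :=
  Real.sqrt (‖x 0‖ ^ 2 + ‖x 1‖ ^ 2 + ‖x 2‖ ^ 2)

/-- The coefficient functions of the Bochner–Martinelli kernel on `ℂ³`. -/
noncomputable def bm (j : Fin 3) (x : Fin 3 → ℂ) : ℂ :=
  (starRingEnd ℂ) (x j) * ((rho x : ℂ) ^ 6)⁻¹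

open scoped RealInnerProductSpace
set_option maxHeartbeats 1600000

namespace BMaux

noncomputable def q (x : Fin 3 → ℂ) : ℝ := ‖x 0‖ ^ 2 + ‖x 1‖ ^ 2 + ‖x 2‖ ^ 2

lemma q_nonneg (x : Fin 3 → ℂ) : 0 ≤ q x := by unfold q; positivity

lemma q_pos {x : Fin 3 → ℂ} (hx : x ≠ 0) : 0 < q x := by
  rcases (q_nonneg x).lt_or_eq with h | h
  · exact h
  · exfalso; apply hx
    have h0 : ‖x 0‖ ^ 2 + ‖x 1‖ ^ 2 + ‖x 2‖ ^ 2 = 0 := h.symm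
    have e0 : ‖x 0‖ = 0 := by nlinarith [norm_nonneg (x 0), norm_nonneg (x 1), norm_nonneg (x 2)]
    have e1 : ‖x 1‖ = 0 := by nlinarith [norm_nonneg (x 0), norm_nonneg (x 1), norm_nonneg (x 2)]
    have e2 : ‖x 2‖ = 0 := by nlinarith [norm_nonneg (x 0), norm_nonneg (x 1), norm_nonneg (x 2)]
    funext i
    fin_cases i
    · exact norm_eq_zero.mp e0
    · exact norm_eq_zero.mp e1
    · exact norm_eq_zero.mp e2

lemma bm_eq (j : Fin 3) : bm j = fun x => (starRingEnd ℂ) (x j) * (((q x : ℝ) : ℂ) ^ 3)⁻¹ := by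
  funext x
  unfold bm rho q
  congr 2
  have hq : (0:ℝ) ≤ ‖x 0‖ ^ 2 + ‖x 1‖ ^ 2 + ‖x 2‖ ^ 2 := by positivity
  have h6 : (Real.sqrt (‖x 0‖ ^ 2 + ‖x 1‖ ^ 2 + ‖x 2‖ ^ 2)) ^ 6
      = (‖x 0‖ ^ 2 + ‖x 1‖ ^ 2 + ‖x 2‖ ^ 2) ^ 3 := by
    rw [show (6:ℕ) = 2 * 3 from rfl, pow_mul, Real.sq_sqrt hq]
  rw [← Complex.ofReal_pow, ← Complex.ofReal_pow, h6]

lemma hasFDerivAt_sq (j : Fin 3) (x : Fin 3 → ℂ) :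
    HasFDerivAt (fun y : Fin 3 → ℂ => ‖y j‖ ^ 2)
      (2 • (innerSL ℝ (x j)).comp (ContinuousLinearMap.proj (R := ℝ) j)) x := by
  have := ((ContinuousLinearMap.proj (R := ℝ) (φ := fun _ : Fin 3 => ℂ) j).hasFDerivAt
    (x := x)).norm_sq
  exact this

lemma hasFDerivAt_q (x : Fin 3 → ℂ) :
    HasFDerivAt q
      ((2 • (innerSL ℝ (x 0)).comp (ContinuousLinearMap.proj (R := ℝ) 0)) +
       (2 • (innerSL ℝ (x 1)).comp (ContinuousLinearMap.proj (R := ℝ) 1)) +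
       (2 • (innerSL ℝ (x 2)).comp (ContinuousLinearMap.proj (R := ℝ) 2))) x :=
  ((hasFDerivAt_sq 0 x).add (hasFDerivAt_sq 1 x)).add (hasFDerivAt_sq 2 x)

lemma fderiv_bm (j : Fin 3) (x : Fin 3 → ℂ) (hx : x ≠ 0) (v : Fin 3 → ℂ) :
    fderiv ℝ (bm j) x v =
      (starRingEnd ℂ) (v j) * (((q x : ℝ) : ℂ) ^ 3)⁻¹
      + (starRingEnd ℂ) (x j) * (-(3 * ((q x : ℝ) : ℂ) ^ 2) / (((q x : ℝ) : ℂ) ^ 3) ^ 2 *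
          ((2 * ⟪x 0, v 0⟫ + 2 * ⟪x 1, v 1⟫ + 2 * ⟪x 2, v 2⟫ : ℝ) : ℂ)) := by
  obtain ⟨L, hqL, hLv⟩ : ∃ L : (Fin 3 → ℂ) →L[ℝ] ℝ, HasFDerivAt q L x ∧
      L v = 2 * ⟪x 0, v 0⟫ + 2 * ⟪x 1, v 1⟫ + 2 * ⟪x 2, v 2⟫ := by
    refine ⟨_, hasFDerivAt_q x, ?_⟩
    simp [real_inner_comm]
    ring
  have hQ : ((q x : ℝ) : ℂ) ≠ 0 := by exact_mod_cast (q_pos hx).ne'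
  have hqc : HasFDerivAt (fun y : Fin 3 → ℂ => ((q y : ℝ) : ℂ))
      (Complex.ofRealCLM.comp L) x := Complex.ofRealCLM.hasFDerivAt.comp x hqL
  have hcube : HasDerivAt (fun z : ℂ => (z ^ 3)⁻¹)
      (-(((3:ℕ) : ℂ) * ((q x : ℝ) : ℂ) ^ 2) / (((q x : ℝ) : ℂ) ^ 3) ^ 2) ((q x : ℝ) : ℂ) :=
    (hasDerivAt_pow 3 _).inv (pow_ne_zero _ hQ)
  have hinv : HasFDerivAt (fun y : Fin 3 → ℂ => (((q y : ℝ) : ℂ) ^ 3)⁻¹)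
      ((((1 : ℂ →L[ℂ] ℂ).smulRight
          (-(((3:ℕ) : ℂ) * ((q x : ℝ) : ℂ) ^ 2) / (((q x : ℝ) : ℂ) ^ 3) ^ 2)).restrictScalars ℝ).comp
        (Complex.ofRealCLM.comp L)) x :=
    by have h := (hcube.hasFDerivAt.restrictScalars ℝ).comp x hqc; exact h
  have hconj : HasFDerivAt (fun y : Fin 3 → ℂ => (starRingEnd ℂ) (y j))
      ((Complex.conjCLE.toContinuousLinearMap).comp
        (ContinuousLinearMap.proj (R := ℝ) j)) x := by
    have := ((Complex.conjCLE.toContinuousLinearMap).comp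
      (ContinuousLinearMap.proj (R := ℝ) (φ := fun _ : Fin 3 => ℂ) j)).hasFDerivAt (x := x)
    exact this
  have hbm : HasFDerivAt (fun y : Fin 3 → ℂ => (starRingEnd ℂ) (y j) * (((q y : ℝ) : ℂ) ^ 3)⁻¹) _ x :=
    hconj.mul hinv
  rw [bm_eq j, hbm.fderiv]
  simp only [ContinuousLinearMap.add_apply, ContinuousLinearMap.coe_smul',
    ContinuousLinearMap.comp_apply, ContinuousLinearMap.smulRight_apply,
    ContinuousLinearMap.smul_apply, ContinuousLinearMap.coe_restrictScalars',
    ContinuousLinearMap.one_apply, ContinuousLinearMap.proj_apply,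
    ContinuousLinearEquiv.coe_coe, Complex.conjCLE_apply, Complex.ofRealCLM_apply,
    Pi.smul_apply, smul_eq_mul, hLv]
  push_cast
  ring

lemma inner_single (j : Fin 3) (x : Fin 3 → ℂ) (c : ℂ) :
    (2 * ⟪x 0, (Pi.single j c : Fin 3 → ℂ) 0⟫ + 2 * ⟪x 1, (Pi.single j c : Fin 3 → ℂ) 1⟫
      + 2 * ⟪x 2, (Pi.single j c : Fin 3 → ℂ) 2⟫ : ℝ) = 2 * ⟪x j, c⟫ := by
  fin_cases j <;> simp [Pi.single_apply]

lemma wbar_bm (j : Fin 3) (x : Fin 3 → ℂ) (hx : x ≠ 0) :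
    wbar j (bm j) x
      = (((q x : ℝ) : ℂ) ^ 3)⁻¹
        - 3 * ((Complex.normSq (x j) : ℝ) : ℂ) * (((q x : ℝ) : ℂ) ^ 4)⁻¹ := by
  have hQ : ((q x : ℝ) : ℂ) ≠ 0 := by exact_mod_cast (q_pos hx).ne'
  have h1 : ⟪x j, (1 : ℂ)⟫ = (x j).re := by simp [Complex.inner]
  have h2 : ⟪x j, Complex.I⟫ = (x j).im := by simp [Complex.inner]
  have hc : (starRingEnd ℂ) (x j) * (((x j).re : ℂ) + ((x j).im : ℂ) * Complex.I)
      = ((Complex.normSq (x j) : ℝ) : ℂ) := by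
    rw [Complex.re_add_im, Complex.normSq_eq_conj_mul_self]
  unfold wbar
  rw [fderiv_bm j x hx, fderiv_bm j x hx, inner_single, inner_single, h1, h2,
    Pi.single_eq_same, Pi.single_eq_same, map_one, Complex.conj_I]
  push_cast
  field_simp
  linear_combination (-((q x : ℝ) : ℂ)) * Complex.I_sq
    + (-6) * hc

theorem bochnerMartinelli_dbar_closed (x : Fin 3 → ℂ) (hx : x ≠ 0) :
    wbar 0 (bm 0) x + wbar 1 (bm 1) x + wbar 2 (bm 2) x = 0 := by
  have hQ : ((q x : ℝ) : ℂ) ≠ 0 := by exact_mod_cast (q_pos hx).ne'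
  have hsum : ((Complex.normSq (x 0) : ℝ) : ℂ) + ((Complex.normSq (x 1) : ℝ) : ℂ)
      + ((Complex.normSq (x 2) : ℝ) : ℂ) = ((q x : ℝ) : ℂ) := by
    have : Complex.normSq (x 0) + Complex.normSq (x 1) + Complex.normSq (x 2) = q x := by
      simp [q, ← Complex.sq_norm]
    exact_mod_cast this
  rw [wbar_bm 0 x hx, wbar_bm 1 x hx, wbar_bm 2 x hx]
  field_simp
  linear_combination (-3) * hsum

end BMaux

/-- The Bochner–Martinelli kernel on `ℂ³` is `∂̄`-closed away from the origin. -/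
theorem bochnerMartinelli_dbar_closed (x : Fin 3 → ℂ) (hx : x ≠ 0) :
    wbar 0 (bm 0) x + wbar 1 (bm 1) x + wbar 2 (bm 2) x = 0 :=
  BMaux.bochnerMartinelli_dbar_closed x hx
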